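/- For every s > 2 there exist constants C₁, C₂ > 0 (depending only on s) with the following property: for every real random variable X with Lebesgue density p, E X = 0, Var(X) = 1, E|X|^s < ∞ and ‖p − φ‖_2 ≤ 1, D(X) ≤ C₁·(‖p − φ‖_1 + ‖p − φ‖_2) + C₂·(E|X|^s)^{2/s}·(‖p − φ‖_1 + ‖p − φ‖_2)^{1−2/s}. -/

import Mathlib

open MeasureTheory Real Filter
open scoped ENNReal

noncomputable section

/-- The standard Gaussian density on `ℝ`. -/
def gauss (x : ℝ) : ℝ := (Real.sqrt (2 * Real.pi))⁻¹ * Real.exp (-x ^ 2 / 2)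

/-- The real-valued `L^q(ℝ)` norm. -/
def nrm (f : ℝ → ℝ) (q : ℝ≥0∞) : ℝ := (eLpNorm f q volume).toReal

/-- Kullback–Leibler divergence between densities:  `∫ p_X ln (p_X / p_Y)`. -/
def KLdiv (pX pY : ℝ → ℝ) : ℝ := ∫ x, pX x * Real.log (pX x / pY x)

lemma gauss_pos (x : ℝ) : 0 < gauss x := by
  unfold gauss; positivity

lemma gauss_cont : Continuous gauss := by
  unfold gauss
  exact continuous_const.mul ((continuous_pow 2).neg.div_const 2).rexp

lemma log_sqrt_two_pi_pos : 0 < Real.log (Real.sqrt (2 * Real.pi)) := by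
  apply Real.log_pos
  rw [show (1:ℝ) = Real.sqrt 1 by simp]
  exact Real.sqrt_lt_sqrt (by norm_num) (by nlinarith [Real.pi_gt_three])

lemma gauss_log (x : ℝ) :
    Real.log (gauss x) = -(Real.log (Real.sqrt (2 * Real.pi)) + x ^ 2 / 2) := by
  unfold gauss
  rw [Real.log_mul (by positivity) (Real.exp_ne_zero _), Real.log_inv, Real.log_exp]
  ring

lemma gauss_integrable : Integrable gauss := by
  have h : Integrable (fun x : ℝ => Real.exp (-(1/2) * x ^ 2)) := integrable_exp_neg_mul_sq (by norm_num)
  have : gauss = fun x => (Real.sqrt (2 * Real.pi))⁻¹ * Real.exp (-(1/2) * x ^ 2) := by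
    funext x; unfold gauss; ring_nf
  rw [this]
  exact h.const_mul _

lemma pow_mul_gauss_integrable (n : ℕ) : Integrable (fun x : ℝ => x ^ n * gauss x) := by
  have h : Integrable (fun x : ℝ => x ^ (n : ℝ) * Real.exp (-(1/2) * x ^ 2)) :=
    integrable_rpow_mul_exp_neg_mul_sq (by norm_num) (lt_of_lt_of_le neg_one_lt_zero (Nat.cast_nonneg n))
  simp_rw [Real.rpow_natCast] at h
  have : (fun x : ℝ => x ^ n * gauss x)
      = fun x => (Real.sqrt (2 * Real.pi))⁻¹ * (x ^ n * Real.exp (-(1/2) * x ^ 2)) := by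
    funext x; unfold gauss; ring_nf
  rw [this]
  exact (h.const_mul _)

lemma abs_rpow_mul_gauss_integrable {s : ℝ} (hs : 0 ≤ s) :
    Integrable (fun x : ℝ => |x| ^ s * gauss x) := by
  set m : ℕ := ⌈s⌉₊ with hm
  have hsm : s ≤ 2 * m := by
    have := Nat.le_ceil s
    calc s ≤ (m : ℝ) := this
    _ ≤ 2 * m := by nlinarith [Nat.cast_nonneg (α := ℝ) m]
  apply Integrable.mono' ((gauss_integrable).add ((pow_mul_gauss_integrable (2*m))))
  · exact ((measurable_abs.pow_const s).mul gauss_cont.measurable).aestronglyMeasurable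
  · filter_upwards with x
    have hg := (gauss_pos x).le
    rw [Real.norm_eq_abs, abs_of_nonneg (mul_nonneg (Real.rpow_nonneg (abs_nonneg x) s) (gauss_pos x).le), Pi.add_apply]
    rcases le_or_gt (|x|) 1 with h | h
    · have : |x| ^ s ≤ 1 := Real.rpow_le_one (abs_nonneg x) h hs
      have h2 : (0:ℝ) ≤ x ^ (2*m) * gauss x := mul_nonneg (by rw [pow_mul]; exact pow_nonneg (sq_nonneg x) m) (gauss_pos x).le
      nlinarith [gauss_pos x]
    · have h1 : |x| ^ s ≤ |x| ^ ((2*m : ℕ) : ℝ) := by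
        apply Real.rpow_le_rpow_of_exponent_le h.le
        push_cast; exact_mod_cast hsm
      have h2 : |x| ^ ((2*m : ℕ) : ℝ) = x ^ (2*m) := by
        rw [Real.rpow_natCast, pow_mul, pow_mul, sq_abs]
      have h3 : |x| ^ s * gauss x ≤ x ^ (2*m) * gauss x := by
        rw [← h2]; exact mul_le_mul_of_nonneg_right (h2 ▸ h1) hg
      nlinarith [gauss_pos x]

lemma key_ptwise (x : ℝ) {px : ℝ} (hp : 0 ≤ px) :
    px * Real.log (px / gauss x) ≤
      (2 + 2 * Real.log (Real.sqrt (2 * Real.pi))) * |px - gauss x|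
        + 4 * (px - gauss x) ^ 2 + x ^ 2 * |px - gauss x| := by
  set c := Real.log (Real.sqrt (2 * Real.pi)) with hcdef
  have hc : 0 < c := log_sqrt_two_pi_pos
  have hφ : 0 < gauss x := gauss_pos x
  set φ := gauss x with hφdef
  have habs : 0 ≤ |px - φ| := abs_nonneg _
  have hsq : 0 ≤ (px - φ) ^ 2 := sq_nonneg _
  have hx2 : 0 ≤ x ^ 2 := sq_nonneg _
  rcases le_or_gt px φ with h1 | h1
  · have hlog : Real.log (px / φ) ≤ 0 :=
      Real.log_nonpos (div_nonneg hp hφ.le) ((div_le_one hφ).mpr h1)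
    have : px * Real.log (px / φ) ≤ 0 := mul_nonpos_of_nonneg_of_nonpos hp hlog
    nlinarith
  · rcases le_or_gt px (2 * φ) with h2 | h2
    · have hlog : Real.log (px / φ) ≤ px / φ - 1 :=
        Real.log_le_sub_one_of_pos (div_pos (by linarith) hφ)
      have hb : px * Real.log (px / φ) ≤ px * (px / φ - 1) :=
        mul_le_mul_of_nonneg_left hlog hp
      have he : px * (px / φ - 1) = px * (px - φ) / φ := by field_simp
      have hd : px * (px - φ) / φ ≤ 2 * (px - φ) := by
        rw [div_le_iff₀ hφ]
        nlinarith
      have habs2 : |px - φ| = px - φ := abs_of_pos (by linarith)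
      nlinarith
    · have hppos : 0 < px := by linarith
      have hp2f : px ≤ 2 * (px - φ) := by linarith
      have hlogs : Real.log (px / φ) = Real.log px + (c + x ^ 2 / 2) := by
        rw [Real.log_div (ne_of_gt hppos) (ne_of_gt hφ), hφdef, gauss_log]
        ring
      have hlp : Real.log px ≤ px := by
        have := Real.log_le_sub_one_of_pos hppos; linarith
      have habs2 : |px - φ| = px - φ := abs_of_pos (by linarith)
      rw [hlogs, habs2]
      have h3 : px * Real.log px ≤ px * px := mul_le_mul_of_nonneg_left hlp hp
      nlinarith

lemma one_le_moment {s : ℝ} (hs : 2 < s) {p : ℝ → ℝ} (hmeas : Measurable p)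
    (hpos : ∀ x, 0 ≤ p x) (hp : Integrable p) (hint1 : (∫ x, p x) = 1)
    (hsq : Integrable (fun x => x ^ 2 * p x)) (hvar : (∫ x, x ^ 2 * p x) = 1)
    (hsint : Integrable (fun x => |x| ^ s * p x)) :
    1 ≤ ∫ x, |x| ^ s * p x := by
  have hs0 : (0:ℝ) < s := by linarith
  have h2s : 0 < 2/s := by positivity
  have h12s : 0 ≤ 1 - 2/s := by
    rw [sub_nonneg, div_le_one hs0]; linarith
  have hconj : Real.HolderConjugate (s/2) (s/(s-2)) := by
    refine Real.holderConjugate_iff.mpr ⟨?_, ?_⟩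
    · linarith [(by linarith : (2:ℝ) < s)]
    · field_simp; ring
  set F : ℝ → ℝ≥0∞ := fun x => (ENNReal.ofReal (|x| ^ s * p x)) ^ (2/s) with hF
  set G : ℝ → ℝ≥0∞ := fun x => (ENNReal.ofReal (p x)) ^ (1 - 2/s) with hG
  have hFmeas : AEMeasurable F volume := by
    apply Measurable.aemeasurable
    exact (((measurable_abs.pow_const s).mul hmeas).ennreal_ofReal).pow_const _
  have hGmeas : AEMeasurable G volume := by
    apply Measurable.aemeasurable
    exact (hmeas.ennreal_ofReal).pow_const _
  have hmul : ∀ x, (F * G) x = ENNReal.ofReal (x ^ 2 * p x) := by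
    intro x
    simp only [Pi.mul_apply, hF, hG]
    rw [ENNReal.ofReal_rpow_of_nonneg (mul_nonneg (Real.rpow_nonneg (abs_nonneg x) s) (hpos x)) h2s.le,
        ENNReal.ofReal_rpow_of_nonneg (hpos x) h12s,
        ← ENNReal.ofReal_mul (Real.rpow_nonneg (mul_nonneg (Real.rpow_nonneg (abs_nonneg x) s) (hpos x)) _)]
    congr 1
    have e1 : s * (2/s) = ((2:ℕ):ℝ) := by push_cast; field_simp
    have e2 : p x ^ (2/s) * p x ^ (1 - 2/s) = p x := by
      rw [← Real.rpow_add' (hpos x) (by norm_num)]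
      norm_num
    rw [Real.mul_rpow (Real.rpow_nonneg (abs_nonneg x) s) (hpos x),
        ← Real.rpow_mul (abs_nonneg x), e1, Real.rpow_natCast, mul_assoc, e2, sq_abs]
  have hH := ENNReal.lintegral_mul_le_Lp_mul_Lq volume hconj hFmeas hGmeas
  have hFpow : ∀ x, F x ^ (s/2) = ENNReal.ofReal (|x| ^ s * p x) := by
    intro x
    rw [hF, ← ENNReal.rpow_mul]
    have : 2/s * (s/2) = 1 := by field_simp
    rw [this, ENNReal.rpow_one]
  have hGpow : ∀ x, G x ^ (s/(s-2)) = ENNReal.ofReal (p x) := by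
    intro x
    rw [hG, ← ENNReal.rpow_mul]
    have hs2 : s - 2 ≠ 0 := by linarith
    have : (1 - 2/s) * (s/(s-2)) = 1 := by
      field_simp
    rw [this, ENNReal.rpow_one]
  have hL : (∫⁻ x, (F * G) x) = 1 := by
    rw [lintegral_congr hmul,
        ← ofReal_integral_eq_lintegral_ofReal hsq
          (Filter.Eventually.of_forall fun x => mul_nonneg (sq_nonneg x) (hpos x)),
        hvar, ENNReal.ofReal_one]
  have hR1 : (∫⁻ x, F x ^ (s/2)) = ENNReal.ofReal (∫ x, |x| ^ s * p x) := by
    rw [lintegral_congr hFpow,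
        ← ofReal_integral_eq_lintegral_ofReal hsint
          (Filter.Eventually.of_forall fun x => mul_nonneg (Real.rpow_nonneg (abs_nonneg x) s) (hpos x))]
  have hR2 : (∫⁻ x, G x ^ (s/(s-2))) = 1 := by
    rw [lintegral_congr hGpow,
        ← ofReal_integral_eq_lintegral_ofReal hp
          (Filter.Eventually.of_forall fun x => hpos x),
        hint1, ENNReal.ofReal_one]
  rw [hL, hR1, hR2, ENNReal.one_rpow, mul_one] at hH
  have hinv : 1/(s/2) = 2/s := by field_simp
  rw [hinv] at hH
  have hM1 : (1:ℝ≥0∞) ≤ ENNReal.ofReal (∫ x, |x| ^ s * p x) := by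
    by_contra hcon
    push_neg at hcon
    have := ENNReal.rpow_lt_one hcon h2s
    exact absurd (lt_of_le_of_lt hH this) (lt_irrefl _)
  rwa [ENNReal.one_le_ofReal] at hM1

set_option maxHeartbeats 1000000 in
/-- **Corollary 2.4.** For every `s > 2` there are constants `C₁, C₂ > 0` such that for any
random variable `X` with density `p`, `E X = 0`, `Var X = 1`, `E|X|^s < ∞` and `‖p−φ‖₂ ≤ 1`,
`D(X) ≤ C₁ (‖p−φ‖₁ + ‖p−φ‖₂) + C₂ (E|X|^s)^{2/s} (‖p−φ‖₁ + ‖p−φ‖₂)^{1−2/s}`. -/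
theorem D_upper_bound_L1_L2 :
    ∀ s : ℝ, 2 < s →
      ∃ C₁ C₂ : ℝ, 0 < C₁ ∧ 0 < C₂ ∧
        ∀ p : ℝ → ℝ, Measurable p → (∀ x, 0 ≤ p x) → (∫ x, p x) = 1 →
          Integrable (fun x => x * p x) → (∫ x, x * p x) = 0 →
          Integrable (fun x => x ^ 2 * p x) → (∫ x, x ^ 2 * p x) = 1 →
          Integrable (fun x => |x| ^ s * p x) →
          eLpNorm (fun x => p x - gauss x) 2 volume ≤ 1 →
            KLdiv p gauss ≤
              C₁ * (nrm (fun x => p x - gauss x) 1 + nrm (fun x => p x - gauss x) 2)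
              + C₂ * (∫ x, |x| ^ s * p x) ^ (2 / s) *
                  (nrm (fun x => p x - gauss x) 1 + nrm (fun x => p x - gauss x) 2) ^ (1 - 2 / s) := by
  intro s hs
  have hs0 : (0:ℝ) < s := by linarith
  have h12s : (0:ℝ) < 1 - 2/s := by
    rw [sub_pos, div_lt_one hs0]; linarith
  set c := Real.log (Real.sqrt (2 * Real.pi)) with hc
  have hcpos : 0 < c := log_sqrt_two_pi_pos
  set ms := ∫ x : ℝ, |x| ^ s * gauss x with hmsdef
  have hms0 : 0 ≤ ms :=
    integral_nonneg fun x => mul_nonneg (Real.rpow_nonneg (abs_nonneg x) s) (gauss_pos x).le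
  have hC2pos : 0 < 2 * (1+ms)^(2/s) := by
    have := Real.rpow_pos_of_pos (by linarith : (0:ℝ) < 1+ms) (2/s)
    linarith
  refine ⟨6 + 2*c, 2 * (1+ms)^(2/s), by linarith, hC2pos, ?_⟩
  intro p hmeas hpos hint1 _ _ hsq hvar hsint h2
  set f : ℝ → ℝ := fun x => p x - gauss x with hfdef
  set M := ∫ x : ℝ, |x| ^ s * p x with hMdef
  set N1 := nrm f 1 with hN1def
  set N2 := nrm f 2 with hN2def
  -- basic integrability
  have hp : Integrable p := by
    by_contra h
    rw [integral_undef h] at hint1; exact one_ne_zero hint1.symm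
  have hfmeas : Measurable f := hmeas.sub gauss_cont.measurable
  have hfint : Integrable f := hp.sub gauss_integrable
  have hmem2 : MemLp f 2 volume :=
    ⟨hfmeas.aestronglyMeasurable, lt_of_le_of_lt h2 ENNReal.one_lt_top⟩
  have hf2int : Integrable (fun x => f x ^ 2) := hmem2.integrable_sq
  have hgs : Integrable (fun x => |x| ^ s * gauss x) :=
    abs_rpow_mul_gauss_integrable (by linarith)
  have hfabs : Integrable (fun x => |f x|) := hfint.abs
  have habsle : ∀ x, |f x| ≤ p x + gauss x := by
    intro x
    calc |f x| ≤ |p x| + |gauss x| := abs_sub _ _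
    _ = p x + gauss x := by rw [abs_of_nonneg (hpos x), abs_of_nonneg (gauss_pos x).le]
  have hx2gauss : Integrable (fun x => x ^ 2 * gauss x) := pow_mul_gauss_integrable 2
  have hx2f : Integrable (fun x => x ^ 2 * |f x|) := by
    apply Integrable.mono' (hsq.add hx2gauss)
    · exact ((measurable_id.pow_const 2).mul hfmeas.abs).aestronglyMeasurable
    · filter_upwards with x
      rw [Real.norm_eq_abs, abs_of_nonneg (mul_nonneg (sq_nonneg x) (abs_nonneg _))]
      have := mul_le_mul_of_nonneg_left (habsle x) (sq_nonneg x)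
      simpa [mul_add] using this
  -- norm identities
  have hN1nn : 0 ≤ N1 := ENNReal.toReal_nonneg
  have hN2nn : 0 ≤ N2 := ENNReal.toReal_nonneg
  have hL1 : N1 = ∫ x, |f x| := by
    have h := (memLp_one_iff_integrable.mpr hfint).eLpNorm_eq_integral_rpow_norm
      one_ne_zero ENNReal.one_ne_top
    simp only [ENNReal.toReal_one, Real.rpow_one, inv_one, Real.rpow_natCast, pow_one] at h
    rw [hN1def, nrm, h, ENNReal.toReal_ofReal (integral_nonneg fun x => norm_nonneg _)]
    simp [Real.norm_eq_abs]
  have hInt2 : (∫ x, ‖f x‖ ^ (2:ℝ)) = ∫ x, f x ^ 2 := by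
    apply integral_congr_ae
    filter_upwards with x
    rw [Real.norm_eq_abs, show ((2:ℝ)) = ((2:ℕ):ℝ) by norm_num, Real.rpow_natCast, sq_abs]
  have hN2sq : N2 ^ 2 = ∫ x, f x ^ 2 := by
    have h := hmem2.eLpNorm_eq_integral_rpow_norm (by norm_num) (by norm_num)
    have h2toReal : (2:ℝ≥0∞).toReal = (2:ℝ) := by norm_num
    rw [h2toReal] at h
    have hXnn : 0 ≤ ∫ x, ‖f x‖ ^ (2:ℝ) :=
      integral_nonneg fun x => Real.rpow_nonneg (norm_nonneg _) _
    rw [hN2def, nrm, h, ENNReal.toReal_ofReal (Real.rpow_nonneg hXnn _),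
        ← Real.rpow_natCast ((∫ x, ‖f x‖ ^ (2:ℝ)) ^ (2:ℝ)⁻¹) 2, ← Real.rpow_mul hXnn]
    norm_num [hInt2]
  have hN2le1 : N2 ≤ 1 := by
    rw [hN2def, nrm]
    calc (eLpNorm f 2 volume).toReal ≤ (1:ℝ≥0∞).toReal :=
      ENNReal.toReal_mono (by norm_num) h2
    _ = 1 := by norm_num
  -- moment bound
  have hM1 : 1 ≤ M := one_le_moment hs hmeas hpos hp hint1 hsq hvar hsint
  -- majorant
  set G : ℝ → ℝ := fun x => (2 + 2*c) * |f x| + 4 * f x ^ 2 + x ^ 2 * |f x| with hGdef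
  have hGint : Integrable G := ((hfabs.const_mul _).add (hf2int.const_mul 4)).add hx2f
  have hptwise : ∀ x, p x * Real.log (p x / gauss x) ≤ G x := fun x => key_ptwise x (hpos x)
  have hA1 : Integrable (fun x => (2 + 2*c) * |f x|) := hfabs.const_mul _
  have hA2 : Integrable (fun x => 4 * f x ^ 2) := hf2int.const_mul 4
  have hA12 : Integrable (fun x => (2 + 2*c) * |f x| + 4 * f x ^ 2) := hA1.add hA2
  have hGval : (∫ x, G x) = (2 + 2*c) * N1 + 4 * N2^2 + ∫ x, x ^ 2 * |f x| := by
    show (∫ x, ((2 + 2*c) * |f x| + 4 * f x ^ 2 + x ^ 2 * |f x|))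
      = (2 + 2*c) * N1 + 4 * N2^2 + ∫ x, x ^ 2 * |f x|
    rw [integral_add hA12 hx2f, integral_add hA1 hA2,
        integral_const_mul, integral_const_mul, hL1, hN2sq]
  by_cases hI : Integrable (fun x => p x * Real.log (p x / gauss x))
  · have hD : KLdiv p gauss ≤ ∫ x, G x := by
      rw [KLdiv]; exact integral_mono hI hGint hptwise
    rcases eq_or_lt_of_le (add_nonneg hN1nn hN2nn) with ht0 | ht0
    · -- t = 0
      have hN10 : N1 = 0 := by linarith
      have hN20 : N2 = 0 := by linarith
      have hfae : (fun x => |f x|) =ᵐ[volume] 0 := by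
        rw [← integral_eq_zero_iff_of_nonneg (fun x => abs_nonneg (f x)) hfabs]
        rw [← hL1, hN10]
      have hG0 : (∫ x, G x) = 0 := by
        apply integral_eq_zero_of_ae
        filter_upwards [hfae] with x hx
        have hfx : f x = 0 := abs_eq_zero.mp hx
        rw [hGdef]; simp [hfx]
      rw [hN10, hN20]
      have hz : ((0:ℝ) + 0) ^ (1 - 2/s) = 0 := by
        rw [add_zero, Real.zero_rpow (by linarith)]
      rw [hz]
      simp only [add_zero, mul_zero, zero_add]
      linarith [hD, hG0.le]
    · -- 0 < t
      set t := N1 + N2 with htdef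
      set K := M + ms with hKdef
      have hK1 : (1:ℝ) ≤ K := by linarith
      have hK0 : (0:ℝ) < K := by linarith
      set T := (K/t)^(1/s) with hTdef
      have hT0 : 0 < T := Real.rpow_pos_of_pos (div_pos hK0 ht0) _
      have hsplitptw : ∀ x, x ^ 2 * |f x| ≤
          T^(2:ℝ) * |f x| + T^(2-s) * (|x| ^ s * p x + |x| ^ s * gauss x) := by
        intro x
        have hT2s : 0 ≤ T^(2-s) := (Real.rpow_pos_of_pos hT0 _).le
        have hterm2 : 0 ≤ T^(2-s) * (|x| ^ s * p x + |x| ^ s * gauss x) := by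
          apply mul_nonneg hT2s
          have := Real.rpow_nonneg (abs_nonneg x) s
          have := hpos x
          have := (gauss_pos x).le
          positivity
        have hterm1 : 0 ≤ T^(2:ℝ) * |f x| :=
          mul_nonneg (Real.rpow_pos_of_pos hT0 _).le (abs_nonneg _)
        rcases le_or_gt (|x|) T with hx | hx
        · have hx2 : x ^ 2 ≤ T^(2:ℝ) := by
            rw [show ((2:ℝ)) = ((2:ℕ):ℝ) by norm_num, Real.rpow_natCast, ← sq_abs]
            exact pow_le_pow_left₀ (abs_nonneg x) hx 2
          have := mul_le_mul_of_nonneg_right hx2 (abs_nonneg (f x))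
          linarith
        · have hxpos : 0 < |x| := lt_trans hT0 hx
          have hx2 : x ^ 2 ≤ T^(2-s) * |x| ^ s := by
            have e : x ^ 2 = |x| ^ (s:ℝ) * |x| ^ ((2:ℝ) - s) := by
              rw [← Real.rpow_add hxpos, show s + (2 - s) = ((2:ℕ):ℝ) by norm_num,
                  Real.rpow_natCast, sq_abs]
            rw [e, mul_comm]
            apply mul_le_mul_of_nonneg_right _ (Real.rpow_nonneg (abs_nonneg x) s)
            -- |x|^(2-s) ≤ T^(2-s) since 2-s < 0 and T ≤ |x|
            rw [Real.rpow_def_of_pos hxpos, Real.rpow_def_of_pos hT0]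
            apply Real.exp_le_exp.mpr
            have hlog := Real.log_le_log hT0 hx.le
            nlinarith
          have h1 : x ^ 2 * |f x| ≤ T^(2-s) * |x| ^ s * (p x + gauss x) := by
            apply mul_le_mul hx2 (habsle x) (abs_nonneg _)
            positivity
          have h2 : T^(2-s) * |x| ^ s * (p x + gauss x)
              = T^(2-s) * (|x| ^ s * p x + |x| ^ s * gauss x) := by ring
          linarith
      have hB1 : Integrable (fun x => T^(2:ℝ) * |f x|) := hfabs.const_mul _
      have hBsum : Integrable (fun x => |x| ^ s * p x + |x| ^ s * gauss x) := hsint.add hgs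
      have hB2 : Integrable (fun x => T^(2-s) * (|x| ^ s * p x + |x| ^ s * gauss x)) :=
        hBsum.const_mul _
      have hsplitint : Integrable
          (fun x => T^(2:ℝ) * |f x| + T^(2-s) * (|x| ^ s * p x + |x| ^ s * gauss x)) :=
        hB1.add hB2
      have hJ : (∫ x, x ^ 2 * |f x|) ≤ T^(2:ℝ) * N1 + T^(2-s) * K := by
        calc (∫ x, x ^ 2 * |f x|)
            ≤ ∫ x, (T^(2:ℝ) * |f x| + T^(2-s) * (|x| ^ s * p x + |x| ^ s * gauss x)) :=
              integral_mono hx2f hsplitint hsplitptw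
        _ = T^(2:ℝ) * N1 + T^(2-s) * K := by
            rw [integral_add hB1 hB2, integral_const_mul, integral_const_mul,
                integral_add hsint hgs, hL1]
      -- rpow identities
      have hts : 0 < t^(2/s) := Real.rpow_pos_of_pos ht0 _
      have ht1s : 0 ≤ t^(1 - 2/s) := (Real.rpow_pos_of_pos ht0 _).le
      have hTt : T^(2:ℝ) * t = K^(2/s) * t^(1 - 2/s) := by
        have e1 : T^(2:ℝ) = K^(2/s) / t^(2/s) := by
          rw [hTdef, ← Real.rpow_mul (div_pos hK0 ht0).le,
              show (1/s) * (2:ℝ) = 2/s by ring,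
              Real.div_rpow hK0.le ht0.le]
        have e2 : t^(1 - 2/s) = t / t^(2/s) := by
          rw [Real.rpow_sub ht0, Real.rpow_one]
        rw [e1, e2]
        field_simp
      have hTK : T^(2-s) * K = K^(2/s) * t^(1 - 2/s) := by
        have e1 : T^(2-s) = K^((2-s)/s) / t^((2-s)/s) := by
          rw [hTdef, ← Real.rpow_mul (div_pos hK0 ht0).le,
              show (1/s) * (2-s) = (2-s)/s by ring,
              Real.div_rpow hK0.le ht0.le]
        have e2 : K^((2-s)/s) * K = K^(2/s) := by
          nth_rewrite 2 [← Real.rpow_one K]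
          rw [← Real.rpow_add hK0]
          congr 1
          rw [div_add' _ _ _ hs0.ne']
          rw [div_eq_div_iff hs0.ne' hs0.ne']
          ring
        have e3 : t^((2-s)/s) = (t^(1 - 2/s))⁻¹ := by
          rw [show (2-s)/s = -(1 - 2/s) by field_simp; ring, Real.rpow_neg ht0.le]
        rw [e1, e3, div_eq_mul_inv, inv_inv]
        linear_combination t^(1 - 2/s) * e2
      have hKle : K^(2/s) ≤ (1+ms)^(2/s) * M^(2/s) := by
        rw [← Real.mul_rpow (by linarith : (0:ℝ) ≤ 1+ms) (by linarith : (0:ℝ) ≤ M)]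
        apply Real.rpow_le_rpow (by linarith : (0:ℝ) ≤ K) _ (by positivity)
        have h := mul_le_mul_of_nonneg_left hM1 hms0
        have hexp : (1+ms) * M = M + ms * M := by ring
        rw [hKdef, hexp]
        linarith
      -- assemble
      have hN1t : N1 ≤ t := by rw [htdef]; linarith
      have hN2sqt : N2 ^ 2 ≤ t := by nlinarith
      have hTN1 : T^(2:ℝ) * N1 ≤ T^(2:ℝ) * t :=
        mul_le_mul_of_nonneg_left hN1t (Real.rpow_pos_of_pos hT0 _).le
      have hsum : T^(2:ℝ) * t + T^(2-s) * K ≤ 2 * ((1+ms)^(2/s) * M^(2/s)) * t^(1-2/s) := by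
        rw [hTt, hTK]
        nlinarith [mul_le_mul_of_nonneg_right hKle ht1s]
      calc KLdiv p gauss ≤ ∫ x, G x := hD
      _ = (2 + 2*c) * N1 + 4 * N2^2 + ∫ x, x ^ 2 * |f x| := hGval
      _ ≤ (2 + 2*c) * t + 4 * t + (T^(2:ℝ) * N1 + T^(2-s) * K) := by
          have h4 : 4 * N2^2 ≤ 4 * t := by linarith
          have hcc : (2 + 2*c) * N1 ≤ (2 + 2*c) * t :=
            mul_le_mul_of_nonneg_left hN1t (by linarith)
          linarith
      _ ≤ (2 + 2*c) * t + 4 * t + 2 * ((1+ms)^(2/s) * M^(2/s)) * t^(1-2/s) := by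
          have hstep : T^(2:ℝ) * N1 + T^(2-s) * K
              ≤ 2 * ((1+ms)^(2/s) * M^(2/s)) * t^(1-2/s) :=
            le_trans (add_le_add_left hTN1 _) hsum
          exact add_le_add_right hstep _
      _ ≤ (6 + 2*c) * (N1 + N2) + 2 * (1+ms)^(2/s) * M^(2/s) * (N1 + N2)^(1 - 2/s) := by
          rw [← htdef]; linarith
  · rw [KLdiv, integral_undef hI]
    have h1 : 0 ≤ N1 + N2 := by linarith
    have h2' : 0 ≤ M^(2/s) := Real.rpow_nonneg (by linarith) _
    have h3 : 0 ≤ (N1 + N2)^(1 - 2/s) := Real.rpow_nonneg h1 _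
    have h4 : 0 ≤ (1+ms)^(2/s) := Real.rpow_nonneg (by linarith) _
    apply add_nonneg (mul_nonneg (by linarith) h1)
    exact mul_nonneg (mul_nonneg (by linarith) h2') h3
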